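/- Excess is monotone: if P ⊆ Q are finite subsets of G, then e(P) ≤ e(Q). -/

import Mathlib

open scoped symmDiff

/-- The left translate `gS` of a finite shape `S` in a group `G`. -/
def gset {G : Type*} [Group G] (g : G) (S : Finset G) : Set G :=
  (fun s => g * s) '' (S : Set G)

/-- A `(C,S)`-filling move: `P ⊊ Q`, some translate `gS` meets `P` in exactly
`|S| - 1` elements, and `Q = P ∪ gC`. -/
def FillMove {G : Type*} [Group G] (C S : Finset G) (P Q : Set G) : Prop :=
  P ⊂ Q ∧ ∃ g : G, (P ∩ gset g S).ncard = S.card - 1 ∧ Q = P ∪ gset g C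

/-- The `(C,S)`-filling closure: the union of all sets reachable from `P` by
finitely many filling moves. -/
def fillClosure {G : Type*} [Group G] (C S : Finset G) (P : Set G) : Set G :=
  {x | ∃ Q : Set G, Relation.ReflTransGen (FillMove C S) P Q ∧ x ∈ Q}


/-- The rank of a finite pattern: the least cardinality of a finite set with the
same filling closure. -/
noncomputable def rank {G : Type*} [Group G] (C S : Finset G) (P : Finset G) : ℕ :=
  sInf {n : ℕ | ∃ R : Finset G, R.card = n ∧
    fillClosure C S (R : Set G) = fillClosure C S (P : Set G)}

/-- The excess of a finite pattern. -/
noncomputable def excess {G : Type*} [Group G] (C S : Finset G) (P : Finset G) : ℕ :=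
  P.card - rank C S P

section Aux

variable {G : Type*} [Group G] (C S : Finset G)

lemma stepA (hCS : C ⊆ S) {P P' Q : Set G} (hPP' : P ⊆ P') (h : FillMove C S P Q) :
    Relation.ReflTransGen (FillMove C S) P' (P' ∪ Q) := by
  obtain ⟨hss, g, hcard, rfl⟩ := h
  have hPQ' : P' ∪ (P ∪ gset g C) = P' ∪ gset g C := by
    rw [← Set.union_assoc, Set.union_eq_self_of_subset_right hPP']
  rw [hPQ']
  by_cases hC : gset g C ⊆ P'
  · rw [Set.union_eq_self_of_subset_right hC]
  · have hgSfin : (gset g S).Finite := (S.finite_toSet.image _)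
    have hgS : (gset g S).ncard = S.card := by
      rw [gset, Set.ncard_image_of_injective _ (mul_right_injective g), Set.ncard_coe_finset]
    have hfin' : (P' ∩ gset g S).Finite := hgSfin.subset Set.inter_subset_right
    have h1 : S.card - 1 ≤ (P' ∩ gset g S).ncard := by
      rw [← hcard]
      exact Set.ncard_le_ncard (Set.inter_subset_inter hPP' subset_rfl) hfin'
    have h2 : (P' ∩ gset g S).ncard ≤ S.card := by
      rw [← hgS]; exact Set.ncard_le_ncard Set.inter_subset_right hgSfin
    have hne : (P' ∩ gset g S).ncard ≠ S.card := by
      intro heq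
      have heqs : P' ∩ gset g S = gset g S :=
        Set.eq_of_subset_of_ncard_le Set.inter_subset_right (by rw [heq, hgS]) hgSfin
      have hsub : gset g S ⊆ P' := by rw [← heqs]; exact Set.inter_subset_left
      have hgCS : gset g C ⊆ gset g S := Set.image_mono (Finset.coe_subset.mpr hCS)
      exact hC (hgCS.trans hsub)
    refine Relation.ReflTransGen.single ⟨?_, g, by omega, rfl⟩
    exact Set.ssubset_iff_subset_ne.mpr ⟨Set.subset_union_left,
      fun h => hC (by rw [h]; exact Set.subset_union_right)⟩

lemma stepB (hCS : C ⊆ S) {P P' Q : Set G} (hPP' : P ⊆ P')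
    (h : Relation.ReflTransGen (FillMove C S) P Q) :
    Relation.ReflTransGen (FillMove C S) P' (P' ∪ Q) := by
  induction h with
  | refl => rw [Set.union_eq_self_of_subset_right hPP']
  | @tail Q1 Q2 hr hmove ih =>
      have h2 := stepA C S hCS (Set.subset_union_right (s := P') (t := Q1)) hmove
      have heq : P' ∪ Q1 ∪ Q2 = P' ∪ Q2 := by
        rw [Set.union_assoc, Set.union_eq_self_of_subset_left hmove.1.subset]
      rw [heq] at h2
      exact ih.trans h2

lemma reach_subset {P Q : Set G} (h : Relation.ReflTransGen (FillMove C S) P Q) : P ⊆ Q := by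
  induction h with
  | refl => exact subset_rfl
  | tail _ hmove ih => exact ih.trans hmove.1.subset

lemma fill_subset_closure {P : Set G} : P ⊆ fillClosure C S P :=
  fun x hx => ⟨P, Relation.ReflTransGen.refl, hx⟩

lemma fill_closure_mono (hCS : C ⊆ S) {P P' : Set G} (hPP' : P ⊆ P') :
    fillClosure C S P ⊆ fillClosure C S P' := by
  rintro x ⟨Q, hr, hx⟩
  exact ⟨P' ∪ Q, stepB C S hCS hPP' hr, Set.mem_union_right _ hx⟩

lemma fill_closure_eq_of_reach (hCS : C ⊆ S) {P Q : Set G}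
    (h : Relation.ReflTransGen (FillMove C S) P Q) :
    fillClosure C S P = fillClosure C S Q := by
  apply Set.Subset.antisymm
  · exact fill_closure_mono C S hCS (reach_subset C S h)
  · rintro x ⟨Q', hr, hx⟩
    exact ⟨Q', h.trans hr, hx⟩

lemma reach_union (hCS : C ⊆ S) {R Q1 Q2 : Set G}
    (h1 : Relation.ReflTransGen (FillMove C S) R Q1)
    (h2 : Relation.ReflTransGen (FillMove C S) R Q2) :
    Relation.ReflTransGen (FillMove C S) R (Q1 ∪ Q2) :=
  h1.trans (stepB C S hCS (reach_subset C S h1) h2)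

lemma finset_subset_reach (hCS : C ⊆ S) (R : Set G) (P : Finset G)
    (h : (P : Set G) ⊆ fillClosure C S R) :
    ∃ Q : Set G, Relation.ReflTransGen (FillMove C S) R Q ∧ (P : Set G) ⊆ Q := by
  classical
  induction P using Finset.induction with
  | empty => exact ⟨R, Relation.ReflTransGen.refl, by simp⟩
  | insert _ _ ha ih =>
      rename_i a P
      obtain ⟨Q1, hr1, hs1⟩ := ih (fun x hx => h (by simp [hx]))
      obtain ⟨Q2, hr2, hx2⟩ := h (Finset.mem_coe.mpr (Finset.mem_insert_self a P))
      refine ⟨Q1 ∪ Q2, reach_union C S hCS hr1 hr2, ?_⟩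
      rw [Finset.coe_insert]
      exact Set.insert_subset (Set.mem_union_right _ hx2) (hs1.trans Set.subset_union_left)

lemma closure_union_le (hCS : C ⊆ S) (P R : Finset G) (X : Set G)
    (h : fillClosure C S (R : Set G) = fillClosure C S (P : Set G)) :
    fillClosure C S ((P : Set G) ∪ X) ⊆ fillClosure C S ((R : Set G) ∪ X) := by
  have hPsub : (P : Set G) ⊆ fillClosure C S (R : Set G) := by
    rw [h]; exact fill_subset_closure C S
  obtain ⟨Qs, hrs, hPQ⟩ := finset_subset_reach C S hCS _ P hPsub
  have hreach : Relation.ReflTransGen (FillMove C S) ((R : Set G) ∪ X) (Qs ∪ X) := by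
    have := stepB C S hCS (Set.subset_union_left (s := (R : Set G)) (t := X)) hrs
    have heq : (R : Set G) ∪ X ∪ Qs = Qs ∪ X := by
      rw [Set.union_right_comm,
        Set.union_eq_self_of_subset_left (reach_subset C S hrs)]
    rwa [heq] at this
  calc fillClosure C S ((P : Set G) ∪ X)
      ⊆ fillClosure C S (Qs ∪ X) :=
        fill_closure_mono C S hCS (Set.union_subset_union_left X hPQ)
    _ = fillClosure C S ((R : Set G) ∪ X) :=
        (fill_closure_eq_of_reach C S hCS hreach).symm

lemma closure_union_eq (hCS : C ⊆ S) (P R : Finset G) (X : Set G)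
    (h : fillClosure C S (R : Set G) = fillClosure C S (P : Set G)) :
    fillClosure C S ((R : Set G) ∪ X) = fillClosure C S ((P : Set G) ∪ X) :=
  Set.Subset.antisymm (closure_union_le C S hCS R P X h.symm) (closure_union_le C S hCS P R X h)

end Aux

/-- Excess is monotone: if `P ⊆ Q` then `e(P) ≤ e(Q)`. -/
theorem excess_monotone {G : Type*} [Group G] (C S : Finset G) (hCS : C ⊆ S)
    (hfin : ∀ P : Finset G, (fillClosure C S (P : Set G)).Finite)
    (P Q : Finset G) (hPQ : P ⊆ Q) :
    excess C S P ≤ excess C S Q := by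
  classical
  have hne : {n : ℕ | ∃ R : Finset G, R.card = n ∧
      fillClosure C S (R : Set G) = fillClosure C S (P : Set G)}.Nonempty := ⟨P.card, P, rfl, rfl⟩
  obtain ⟨R0, hR0card, hR0⟩ := Nat.sInf_mem hne
  have hR0rank : R0.card = rank C S P := hR0card
  have key : fillClosure C S ((R0 ∪ (Q \ P) : Finset G) : Set G)
      = fillClosure C S (Q : Set G) := by
    rw [Finset.coe_union, closure_union_eq C S hCS P R0 ((Q \ P : Finset G) : Set G) hR0,
      ← Finset.coe_union, Finset.union_sdiff_of_subset hPQ]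
  have hrQ : rank C S Q ≤ (R0 ∪ (Q \ P)).card := Nat.sInf_le ⟨_, rfl, key⟩
  have hrankP_le : rank C S P ≤ P.card := Nat.sInf_le ⟨P, rfl, rfl⟩
  have hrankQ_le : rank C S Q ≤ Q.card := Nat.sInf_le ⟨Q, rfl, rfl⟩
  have h1 : (R0 ∪ (Q \ P)).card ≤ R0.card + (Q \ P).card := Finset.card_union_le _ _
  have h2 : (Q \ P).card = Q.card - P.card := Finset.card_sdiff_of_subset hPQ
  have h3 : P.card ≤ Q.card := Finset.card_le_card hPQ
  unfold excess
  omega
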